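/- Fix an integer m>2, let B̄ be the periodic discrete Lotka–Volterra exchange matrix of size 3m, and let P̄=(p_{ij})_{i,j∈ℤ/3mℤ} be a skew-symmetric rational matrix with P̄B̄=O. Then P̄ satisfies both (a) p_{i+3,j+3}=p_{ij} for all i,j, and (b) μ_{0̄}(P̄)_{ij}=p_{i−1,j−1} for all i,j, if and only if there exist a₀∈ℚ and a map q:ℤ/mℤ→ℚ with q(0)=0 and q(−n)=−q(n), such that p_{3i+k,3j+l} = q(j−i) + (l−k)·a₀ for all i,j∈ℤ/mℤ and k,l∈{0,1,2}. -/

import Mathlib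

/-- The periodic discrete Lotka–Volterra exchange matrix of size `3m`, indexed by
`ℤ/3mℤ`; indices are read mod `3m`, and the congruence class of the row index mod `3`
is detected via the natural projection `ℤ/3mℤ → ℤ/3ℤ`. -/
def lvBbar (m : ℕ) (i j : ZMod (3 * m)) : ℤ :=
  if ZMod.castHom (dvd_mul_right 3 m) (ZMod 3) i = 0 then
    (if j - i = 1 then 1 else 0) + (if j - i = -1 then 1 else 0)
      - (if j - i = 2 then 1 else 0) - (if j - i = -2 then 1 else 0)
  else if ZMod.castHom (dvd_mul_right 3 m) (ZMod 3) i = 1 then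
    (if j - i = 1 then 1 else 0) + (if j - i = 2 then 1 else 0)
      + (if j - i = -3 then 1 else 0) - (if j - i = -1 then 1 else 0)
      - (if j - i = -2 then 1 else 0) - (if j - i = 3 then 1 else 0)
  else
    -(if j - i = 1 then 1 else 0) - (if j - i = -1 then 1 else 0)
      + (if j - i = 2 then 1 else 0) + (if j - i = -2 then 1 else 0)

/-- The composite Poisson-matrix mutation `μ_{0̄}` at all points `≡ 0 (mod 3)` of
`ℤ/3mℤ`, written entrywise: `p'_{ij} = p_{ij}` if neither `i` nor `j` is `≡ 0 mod 3`;
`p'_{i,3b} = -p_{i,3b} + p_{i,3b-2} + p_{i,3b+2}` if `i ≢ 0`;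
`p'_{3a,j} = -p_{3a,j} + p_{3a-2,j} + p_{3a+2,j}` if `j ≢ 0`; and
`p'_{3a,3b} = Σ_{ε,ε' ∈ {-2,0,2}} s(ε) s(ε') p_{3a+ε,3b+ε'}`, `s(0) = -1`, `s(±2) = 1`. -/
def lvMut0bar (m : ℕ) (P : ZMod (3 * m) → ZMod (3 * m) → ℚ) (i j : ZMod (3 * m)) : ℚ :=
  if ZMod.castHom (dvd_mul_right 3 m) (ZMod 3) i = 0 then
    if ZMod.castHom (dvd_mul_right 3 m) (ZMod 3) j = 0 then
      P (i-2) (j-2) - P (i-2) j + P (i-2) (j+2)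
        - P i (j-2) + P i j - P i (j+2)
        + P (i+2) (j-2) - P (i+2) j + P (i+2) (j+2)
    else -P i j + P (i-2) j + P (i+2) j
  else
    if ZMod.castHom (dvd_mul_right 3 m) (ZMod 3) j = 0 then
      -P i j + P i (j-2) + P i (j+2)
    else P i j

lemma castEq (m : ℕ) (hm : 2 < m) (a b : ℤ) (h1 : a - b < 3*m) (h2 : b - a < 3*m) :
    ((a : ZMod (3*m)) = (b : ZMod (3*m))) ↔ a = b := by
  constructor
  · intro h
    have h0 : ((a - b : ℤ) : ZMod (3*m)) = 0 := by push_cast; rw [h]; ring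
    have hd := (ZMod.intCast_zmod_eq_zero_iff_dvd _ _).mp h0
    have := Int.eq_zero_of_abs_lt_dvd hd (by rw [abs_lt]; omega)
    omega
  · rintro rfl; rfl

lemma zn_m3_m2 (m : ℕ) (hm : 2 < m) : ((-3) : ZMod (3*m)) ≠ (-2) := by
  intro h
  have h2 : ((-3 : ℤ) : ZMod (3*m)) = ((-2 : ℤ) : ZMod (3*m)) := by push_cast; exact_mod_cast h
  rw [castEq m hm _ _ (by omega) (by omega)] at h2; omega
lemma zn_m3_m1 (m : ℕ) (hm : 2 < m) : ((-3) : ZMod (3*m)) ≠ (-1) := by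
  intro h
  have h2 : ((-3 : ℤ) : ZMod (3*m)) = ((-1 : ℤ) : ZMod (3*m)) := by push_cast; exact_mod_cast h
  rw [castEq m hm _ _ (by omega) (by omega)] at h2; omega
lemma zn_m3_p0 (m : ℕ) (hm : 2 < m) : ((-3) : ZMod (3*m)) ≠ (0) := by
  intro h
  have h2 : ((-3 : ℤ) : ZMod (3*m)) = ((0 : ℤ) : ZMod (3*m)) := by push_cast; exact_mod_cast h
  rw [castEq m hm _ _ (by omega) (by omega)] at h2; omega
lemma zn_m3_p1 (m : ℕ) (hm : 2 < m) : ((-3) : ZMod (3*m)) ≠ (1) := by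
  intro h
  have h2 : ((-3 : ℤ) : ZMod (3*m)) = ((1 : ℤ) : ZMod (3*m)) := by push_cast; exact_mod_cast h
  rw [castEq m hm _ _ (by omega) (by omega)] at h2; omega
lemma zn_m3_p2 (m : ℕ) (hm : 2 < m) : ((-3) : ZMod (3*m)) ≠ (2) := by
  intro h
  have h2 : ((-3 : ℤ) : ZMod (3*m)) = ((2 : ℤ) : ZMod (3*m)) := by push_cast; exact_mod_cast h
  rw [castEq m hm _ _ (by omega) (by omega)] at h2; omega
lemma zn_m3_p3 (m : ℕ) (hm : 2 < m) : ((-3) : ZMod (3*m)) ≠ (3) := by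
  intro h
  have h2 : ((-3 : ℤ) : ZMod (3*m)) = ((3 : ℤ) : ZMod (3*m)) := by push_cast; exact_mod_cast h
  rw [castEq m hm _ _ (by omega) (by omega)] at h2; omega
lemma zn_m2_m3 (m : ℕ) (hm : 2 < m) : ((-2) : ZMod (3*m)) ≠ (-3) := by
  intro h
  have h2 : ((-2 : ℤ) : ZMod (3*m)) = ((-3 : ℤ) : ZMod (3*m)) := by push_cast; exact_mod_cast h
  rw [castEq m hm _ _ (by omega) (by omega)] at h2; omega
lemma zn_m2_m1 (m : ℕ) (hm : 2 < m) : ((-2) : ZMod (3*m)) ≠ (-1) := by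
  intro h
  have h2 : ((-2 : ℤ) : ZMod (3*m)) = ((-1 : ℤ) : ZMod (3*m)) := by push_cast; exact_mod_cast h
  rw [castEq m hm _ _ (by omega) (by omega)] at h2; omega
lemma zn_m2_p0 (m : ℕ) (hm : 2 < m) : ((-2) : ZMod (3*m)) ≠ (0) := by
  intro h
  have h2 : ((-2 : ℤ) : ZMod (3*m)) = ((0 : ℤ) : ZMod (3*m)) := by push_cast; exact_mod_cast h
  rw [castEq m hm _ _ (by omega) (by omega)] at h2; omega
lemma zn_m2_p1 (m : ℕ) (hm : 2 < m) : ((-2) : ZMod (3*m)) ≠ (1) := by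
  intro h
  have h2 : ((-2 : ℤ) : ZMod (3*m)) = ((1 : ℤ) : ZMod (3*m)) := by push_cast; exact_mod_cast h
  rw [castEq m hm _ _ (by omega) (by omega)] at h2; omega
lemma zn_m2_p2 (m : ℕ) (hm : 2 < m) : ((-2) : ZMod (3*m)) ≠ (2) := by
  intro h
  have h2 : ((-2 : ℤ) : ZMod (3*m)) = ((2 : ℤ) : ZMod (3*m)) := by push_cast; exact_mod_cast h
  rw [castEq m hm _ _ (by omega) (by omega)] at h2; omega
lemma zn_m2_p3 (m : ℕ) (hm : 2 < m) : ((-2) : ZMod (3*m)) ≠ (3) := by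
  intro h
  have h2 : ((-2 : ℤ) : ZMod (3*m)) = ((3 : ℤ) : ZMod (3*m)) := by push_cast; exact_mod_cast h
  rw [castEq m hm _ _ (by omega) (by omega)] at h2; omega
lemma zn_m1_m3 (m : ℕ) (hm : 2 < m) : ((-1) : ZMod (3*m)) ≠ (-3) := by
  intro h
  have h2 : ((-1 : ℤ) : ZMod (3*m)) = ((-3 : ℤ) : ZMod (3*m)) := by push_cast; exact_mod_cast h
  rw [castEq m hm _ _ (by omega) (by omega)] at h2; omega
lemma zn_m1_m2 (m : ℕ) (hm : 2 < m) : ((-1) : ZMod (3*m)) ≠ (-2) := by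
  intro h
  have h2 : ((-1 : ℤ) : ZMod (3*m)) = ((-2 : ℤ) : ZMod (3*m)) := by push_cast; exact_mod_cast h
  rw [castEq m hm _ _ (by omega) (by omega)] at h2; omega
lemma zn_m1_p0 (m : ℕ) (hm : 2 < m) : ((-1) : ZMod (3*m)) ≠ (0) := by
  intro h
  have h2 : ((-1 : ℤ) : ZMod (3*m)) = ((0 : ℤ) : ZMod (3*m)) := by push_cast; exact_mod_cast h
  rw [castEq m hm _ _ (by omega) (by omega)] at h2; omega
lemma zn_m1_p1 (m : ℕ) (hm : 2 < m) : ((-1) : ZMod (3*m)) ≠ (1) := by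
  intro h
  have h2 : ((-1 : ℤ) : ZMod (3*m)) = ((1 : ℤ) : ZMod (3*m)) := by push_cast; exact_mod_cast h
  rw [castEq m hm _ _ (by omega) (by omega)] at h2; omega
lemma zn_m1_p2 (m : ℕ) (hm : 2 < m) : ((-1) : ZMod (3*m)) ≠ (2) := by
  intro h
  have h2 : ((-1 : ℤ) : ZMod (3*m)) = ((2 : ℤ) : ZMod (3*m)) := by push_cast; exact_mod_cast h
  rw [castEq m hm _ _ (by omega) (by omega)] at h2; omega
lemma zn_m1_p3 (m : ℕ) (hm : 2 < m) : ((-1) : ZMod (3*m)) ≠ (3) := by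
  intro h
  have h2 : ((-1 : ℤ) : ZMod (3*m)) = ((3 : ℤ) : ZMod (3*m)) := by push_cast; exact_mod_cast h
  rw [castEq m hm _ _ (by omega) (by omega)] at h2; omega
lemma zn_p0_m3 (m : ℕ) (hm : 2 < m) : ((0) : ZMod (3*m)) ≠ (-3) := by
  intro h
  have h2 : ((0 : ℤ) : ZMod (3*m)) = ((-3 : ℤ) : ZMod (3*m)) := by push_cast; exact_mod_cast h
  rw [castEq m hm _ _ (by omega) (by omega)] at h2; omega
lemma zn_p0_m2 (m : ℕ) (hm : 2 < m) : ((0) : ZMod (3*m)) ≠ (-2) := by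
  intro h
  have h2 : ((0 : ℤ) : ZMod (3*m)) = ((-2 : ℤ) : ZMod (3*m)) := by push_cast; exact_mod_cast h
  rw [castEq m hm _ _ (by omega) (by omega)] at h2; omega
lemma zn_p0_m1 (m : ℕ) (hm : 2 < m) : ((0) : ZMod (3*m)) ≠ (-1) := by
  intro h
  have h2 : ((0 : ℤ) : ZMod (3*m)) = ((-1 : ℤ) : ZMod (3*m)) := by push_cast; exact_mod_cast h
  rw [castEq m hm _ _ (by omega) (by omega)] at h2; omega
lemma zn_p0_p1 (m : ℕ) (hm : 2 < m) : ((0) : ZMod (3*m)) ≠ (1) := by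
  intro h
  have h2 : ((0 : ℤ) : ZMod (3*m)) = ((1 : ℤ) : ZMod (3*m)) := by push_cast; exact_mod_cast h
  rw [castEq m hm _ _ (by omega) (by omega)] at h2; omega
lemma zn_p0_p2 (m : ℕ) (hm : 2 < m) : ((0) : ZMod (3*m)) ≠ (2) := by
  intro h
  have h2 : ((0 : ℤ) : ZMod (3*m)) = ((2 : ℤ) : ZMod (3*m)) := by push_cast; exact_mod_cast h
  rw [castEq m hm _ _ (by omega) (by omega)] at h2; omega
lemma zn_p0_p3 (m : ℕ) (hm : 2 < m) : ((0) : ZMod (3*m)) ≠ (3) := by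
  intro h
  have h2 : ((0 : ℤ) : ZMod (3*m)) = ((3 : ℤ) : ZMod (3*m)) := by push_cast; exact_mod_cast h
  rw [castEq m hm _ _ (by omega) (by omega)] at h2; omega
lemma zn_p1_m3 (m : ℕ) (hm : 2 < m) : ((1) : ZMod (3*m)) ≠ (-3) := by
  intro h
  have h2 : ((1 : ℤ) : ZMod (3*m)) = ((-3 : ℤ) : ZMod (3*m)) := by push_cast; exact_mod_cast h
  rw [castEq m hm _ _ (by omega) (by omega)] at h2; omega
lemma zn_p1_m2 (m : ℕ) (hm : 2 < m) : ((1) : ZMod (3*m)) ≠ (-2) := by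
  intro h
  have h2 : ((1 : ℤ) : ZMod (3*m)) = ((-2 : ℤ) : ZMod (3*m)) := by push_cast; exact_mod_cast h
  rw [castEq m hm _ _ (by omega) (by omega)] at h2; omega
lemma zn_p1_m1 (m : ℕ) (hm : 2 < m) : ((1) : ZMod (3*m)) ≠ (-1) := by
  intro h
  have h2 : ((1 : ℤ) : ZMod (3*m)) = ((-1 : ℤ) : ZMod (3*m)) := by push_cast; exact_mod_cast h
  rw [castEq m hm _ _ (by omega) (by omega)] at h2; omega
lemma zn_p1_p0 (m : ℕ) (hm : 2 < m) : ((1) : ZMod (3*m)) ≠ (0) := by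
  intro h
  have h2 : ((1 : ℤ) : ZMod (3*m)) = ((0 : ℤ) : ZMod (3*m)) := by push_cast; exact_mod_cast h
  rw [castEq m hm _ _ (by omega) (by omega)] at h2; omega
lemma zn_p1_p2 (m : ℕ) (hm : 2 < m) : ((1) : ZMod (3*m)) ≠ (2) := by
  intro h
  have h2 : ((1 : ℤ) : ZMod (3*m)) = ((2 : ℤ) : ZMod (3*m)) := by push_cast; exact_mod_cast h
  rw [castEq m hm _ _ (by omega) (by omega)] at h2; omega
lemma zn_p1_p3 (m : ℕ) (hm : 2 < m) : ((1) : ZMod (3*m)) ≠ (3) := by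
  intro h
  have h2 : ((1 : ℤ) : ZMod (3*m)) = ((3 : ℤ) : ZMod (3*m)) := by push_cast; exact_mod_cast h
  rw [castEq m hm _ _ (by omega) (by omega)] at h2; omega
lemma zn_p2_m3 (m : ℕ) (hm : 2 < m) : ((2) : ZMod (3*m)) ≠ (-3) := by
  intro h
  have h2 : ((2 : ℤ) : ZMod (3*m)) = ((-3 : ℤ) : ZMod (3*m)) := by push_cast; exact_mod_cast h
  rw [castEq m hm _ _ (by omega) (by omega)] at h2; omega
lemma zn_p2_m2 (m : ℕ) (hm : 2 < m) : ((2) : ZMod (3*m)) ≠ (-2) := by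
  intro h
  have h2 : ((2 : ℤ) : ZMod (3*m)) = ((-2 : ℤ) : ZMod (3*m)) := by push_cast; exact_mod_cast h
  rw [castEq m hm _ _ (by omega) (by omega)] at h2; omega
lemma zn_p2_m1 (m : ℕ) (hm : 2 < m) : ((2) : ZMod (3*m)) ≠ (-1) := by
  intro h
  have h2 : ((2 : ℤ) : ZMod (3*m)) = ((-1 : ℤ) : ZMod (3*m)) := by push_cast; exact_mod_cast h
  rw [castEq m hm _ _ (by omega) (by omega)] at h2; omega
lemma zn_p2_p0 (m : ℕ) (hm : 2 < m) : ((2) : ZMod (3*m)) ≠ (0) := by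
  intro h
  have h2 : ((2 : ℤ) : ZMod (3*m)) = ((0 : ℤ) : ZMod (3*m)) := by push_cast; exact_mod_cast h
  rw [castEq m hm _ _ (by omega) (by omega)] at h2; omega
lemma zn_p2_p1 (m : ℕ) (hm : 2 < m) : ((2) : ZMod (3*m)) ≠ (1) := by
  intro h
  have h2 : ((2 : ℤ) : ZMod (3*m)) = ((1 : ℤ) : ZMod (3*m)) := by push_cast; exact_mod_cast h
  rw [castEq m hm _ _ (by omega) (by omega)] at h2; omega
lemma zn_p2_p3 (m : ℕ) (hm : 2 < m) : ((2) : ZMod (3*m)) ≠ (3) := by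
  intro h
  have h2 : ((2 : ℤ) : ZMod (3*m)) = ((3 : ℤ) : ZMod (3*m)) := by push_cast; exact_mod_cast h
  rw [castEq m hm _ _ (by omega) (by omega)] at h2; omega
lemma zn_p3_m3 (m : ℕ) (hm : 2 < m) : ((3) : ZMod (3*m)) ≠ (-3) := by
  intro h
  have h2 : ((3 : ℤ) : ZMod (3*m)) = ((-3 : ℤ) : ZMod (3*m)) := by push_cast; exact_mod_cast h
  rw [castEq m hm _ _ (by omega) (by omega)] at h2; omega
lemma zn_p3_m2 (m : ℕ) (hm : 2 < m) : ((3) : ZMod (3*m)) ≠ (-2) := by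
  intro h
  have h2 : ((3 : ℤ) : ZMod (3*m)) = ((-2 : ℤ) : ZMod (3*m)) := by push_cast; exact_mod_cast h
  rw [castEq m hm _ _ (by omega) (by omega)] at h2; omega
lemma zn_p3_m1 (m : ℕ) (hm : 2 < m) : ((3) : ZMod (3*m)) ≠ (-1) := by
  intro h
  have h2 : ((3 : ℤ) : ZMod (3*m)) = ((-1 : ℤ) : ZMod (3*m)) := by push_cast; exact_mod_cast h
  rw [castEq m hm _ _ (by omega) (by omega)] at h2; omega
lemma zn_p3_p0 (m : ℕ) (hm : 2 < m) : ((3) : ZMod (3*m)) ≠ (0) := by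
  intro h
  have h2 : ((3 : ℤ) : ZMod (3*m)) = ((0 : ℤ) : ZMod (3*m)) := by push_cast; exact_mod_cast h
  rw [castEq m hm _ _ (by omega) (by omega)] at h2; omega
lemma zn_p3_p1 (m : ℕ) (hm : 2 < m) : ((3) : ZMod (3*m)) ≠ (1) := by
  intro h
  have h2 : ((3 : ℤ) : ZMod (3*m)) = ((1 : ℤ) : ZMod (3*m)) := by push_cast; exact_mod_cast h
  rw [castEq m hm _ _ (by omega) (by omega)] at h2; omega
lemma zn_p3_p2 (m : ℕ) (hm : 2 < m) : ((3) : ZMod (3*m)) ≠ (2) := by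
  intro h
  have h2 : ((3 : ℤ) : ZMod (3*m)) = ((2 : ℤ) : ZMod (3*m)) := by push_cast; exact_mod_cast h
  rw [castEq m hm _ _ (by omega) (by omega)] at h2; omega


lemma lvB_eval0 (m : ℕ) (hm : 2 < m) (j : ZMod (3*m)) (t : ℤ) (ht : -3 ≤ t) (ht' : t ≤ 3)
    (hj : ZMod.castHom (dvd_mul_right 3 m) (ZMod 3) (j + (t:ℤ)) = 0) :
    lvBbar m (j + (t : ℤ)) j = if t = -1 ∨ t = 1 then 1 else if t = -2 ∨ t = 2 then -1 else 0 := by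
  have e : j - (j + ((t:ℤ) : ZMod (3*m))) = ((-t : ℤ) : ZMod (3*m)) := by push_cast; ring
  rw [lvBbar, if_pos hj, e]
  interval_cases t <;> simp [zn_m3_m2 m hm, zn_m3_m1 m hm, zn_m3_p0 m hm, zn_m3_p1 m hm, zn_m3_p2 m hm, zn_m3_p3 m hm, zn_m2_m3 m hm, zn_m2_m1 m hm, zn_m2_p0 m hm, zn_m2_p1 m hm, zn_m2_p2 m hm, zn_m2_p3 m hm, zn_m1_m3 m hm, zn_m1_m2 m hm, zn_m1_p0 m hm, zn_m1_p1 m hm, zn_m1_p2 m hm, zn_m1_p3 m hm, zn_p0_m3 m hm, zn_p0_m2 m hm, zn_p0_m1 m hm, zn_p0_p1 m hm, zn_p0_p2 m hm, zn_p0_p3 m hm, zn_p1_m3 m hm, zn_p1_m2 m hm, zn_p1_m1 m hm, zn_p1_p0 m hm, zn_p1_p2 m hm, zn_p1_p3 m hm, zn_p2_m3 m hm, zn_p2_m2 m hm, zn_p2_m1 m hm, zn_p2_p0 m hm, zn_p2_p1 m hm, zn_p2_p3 m hm, zn_p3_m3 m hm, zn_p3_m2 m hm, zn_p3_m1 m hm,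 zn_p3_p0 m hm, zn_p3_p1 m hm, zn_p3_p2 m hm]

lemma lvB_eval1 (m : ℕ) (hm : 2 < m) (j : ZMod (3*m)) (t : ℤ) (ht : -3 ≤ t) (ht' : t ≤ 3)
    (hj : ZMod.castHom (dvd_mul_right 3 m) (ZMod 3) (j + (t:ℤ)) = 1) :
    lvBbar m (j + (t : ℤ)) j =
      if t = -1 ∨ t = -2 ∨ t = 3 then 1 else if t = 1 ∨ t = 2 ∨ t = -3 then -1 else 0 := by
  have e : j - (j + ((t:ℤ) : ZMod (3*m))) = ((-t : ℤ) : ZMod (3*m)) := by push_cast; ring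
  rw [lvBbar, if_neg (by rw [hj]; decide), if_pos hj, e]
  interval_cases t <;> simp [zn_m3_m2 m hm, zn_m3_m1 m hm, zn_m3_p0 m hm, zn_m3_p1 m hm, zn_m3_p2 m hm, zn_m3_p3 m hm, zn_m2_m3 m hm, zn_m2_m1 m hm, zn_m2_p0 m hm, zn_m2_p1 m hm, zn_m2_p2 m hm, zn_m2_p3 m hm, zn_m1_m3 m hm, zn_m1_m2 m hm, zn_m1_p0 m hm, zn_m1_p1 m hm, zn_m1_p2 m hm, zn_m1_p3 m hm, zn_p0_m3 m hm, zn_p0_m2 m hm, zn_p0_m1 m hm, zn_p0_p1 m hm, zn_p0_p2 m hm, zn_p0_p3 m hm, zn_p1_m3 m hm, zn_p1_m2 m hm, zn_p1_m1 m hm, zn_p1_p0 m hm, zn_p1_p2 m hm, zn_p1_p3 m hm, zn_p2_m3 m hm, zn_p2_m2 m hm, zn_p2_m1 m hm, zn_p2_p0 m hm, zn_p2_p1 m hm, zn_p2_p3 m hm, zn_p3_m3 m hm, zn_p3_m2 m hm, zn_p3_m1 m hm, zn_p3_p0 m hm, zn_p3_p1 m hm, zn_p3_p2 m hm]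

lemma lvB_eval2 (m : ℕ) (hm : 2 < m) (j : ZMod (3*m)) (t : ℤ) (ht : -3 ≤ t) (ht' : t ≤ 3)
    (hj : ZMod.castHom (dvd_mul_right 3 m) (ZMod 3) (j + (t:ℤ)) = 2) :
    lvBbar m (j + (t : ℤ)) j =
      if t = -1 ∨ t = 1 then -1 else if t = -2 ∨ t = 2 then 1 else 0 := by
  have e : j - (j + ((t:ℤ) : ZMod (3*m))) = ((-t : ℤ) : ZMod (3*m)) := by push_cast; ring
  rw [lvBbar, if_neg (by rw [hj]; decide), if_neg (by rw [hj]; decide), e]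
  interval_cases t <;> simp [zn_m3_m2 m hm, zn_m3_m1 m hm, zn_m3_p0 m hm, zn_m3_p1 m hm, zn_m3_p2 m hm, zn_m3_p3 m hm, zn_m2_m3 m hm, zn_m2_m1 m hm, zn_m2_p0 m hm, zn_m2_p1 m hm, zn_m2_p2 m hm, zn_m2_p3 m hm, zn_m1_m3 m hm, zn_m1_m2 m hm, zn_m1_p0 m hm, zn_m1_p1 m hm, zn_m1_p2 m hm, zn_m1_p3 m hm, zn_p0_m3 m hm, zn_p0_m2 m hm, zn_p0_m1 m hm, zn_p0_p1 m hm, zn_p0_p2 m hm, zn_p0_p3 m hm, zn_p1_m3 m hm, zn_p1_m2 m hm, zn_p1_m1 m hm, zn_p1_p0 m hm, zn_p1_p2 m hm, zn_p1_p3 m hm, zn_p2_m3 m hm, zn_p2_m2 m hm, zn_p2_m1 m hm, zn_p2_p0 m hm, zn_p2_p1 m hm, zn_p2_p3 m hm, zn_p3_m3 m hm, zn_p3_m2 m hm, zn_p3_m1 m hm, zn_p3_p0 m hm, zn_p3_p1 m hm, zn_p3_p2 m hm]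

lemma finsum_red (m : ℕ) (hm : 2 < m) (P : ZMod (3*m) → ZMod (3*m) → ℚ)
    (i j : ZMod (3*m)) :
    ∑ᶠ l, P i l * (lvBbar m l j : ℚ) =
      ∑ t ∈ ({-3,-2,-1,1,2,3} : Finset ℤ), P i (j + (t:ℤ)) * (lvBbar m (j + (t:ℤ)) j : ℚ) := by
  haveI : NeZero (3*m) := ⟨by omega⟩
  rw [finsum_eq_finset_sum_of_support_subset _
    (s := (({-3,-2,-1,1,2,3} : Finset ℤ)).image (fun t : ℤ => j + (t : ZMod (3*m))))]
  · rw [Finset.sum_image]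
    intro s hs t ht hst
    rw [Finset.mem_coe] at hs ht
    have h : ((s : ZMod (3*m))) = ((t : ZMod (3*m))) := by
      have := hst; exact add_left_cancel this
    rw [castEq m hm s t ?_ ?_] at h
    · exact h
    · fin_cases hs <;> fin_cases ht <;> omega
    · fin_cases hs <;> fin_cases ht <;> omega
  · intro l hl
    simp only [Function.mem_support] at hl
    simp only [Finset.coe_image, Set.mem_image, Finset.mem_coe]
    by_contra hc
    push_neg at hc
    have hn : ∀ t : ℤ, t ∈ ({-3,-2,-1,1,2,3} : Finset ℤ) → j + (t : ZMod (3*m)) ≠ l := by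
      intro t ht he
      exact (hc t ht he).elim
    have h1 : ¬ (j - l = 1) := fun hc2 => hn (-1) (by decide) (by push_cast; linear_combination hc2)
    have h2 : ¬ (j - l = -1) := fun hc2 => hn 1 (by decide) (by push_cast; linear_combination hc2)
    have h3 : ¬ (j - l = 2) := fun hc2 => hn (-2) (by decide) (by push_cast; linear_combination hc2)
    have h4 : ¬ (j - l = -2) := fun hc2 => hn 2 (by decide) (by push_cast; linear_combination hc2)
    have h5 : ¬ (j - l = 3) := fun hc2 => hn (-3) (by decide) (by push_cast; linear_combination hc2)
    have h6 : ¬ (j - l = -3) := fun hc2 => hn 3 (by decide) (by push_cast; linear_combination hc2)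
    apply hl
    rw [lvBbar]
    simp [h1, h2, h3, h4, h5, h6]

lemma col0 (m : ℕ) (hm : 2 < m) (P : ZMod (3*m) → ZMod (3*m) → ℚ)
    (hPB : ∀ i j, ∑ᶠ l, P i l * (lvBbar m l j : ℚ) = 0) (i j : ZMod (3*m))
    (hj : ZMod.castHom (dvd_mul_right 3 m) (ZMod 3) j = 0) :
    P i (j - 2) + P i (j + 2) - P i (j - 1) - P i (j + 1) = 0 := by
  have h := hPB i j
  rw [finsum_red m hm P i j] at h
  have hc : ∀ t : ℤ, ZMod.castHom (dvd_mul_right 3 m) (ZMod 3) (j + (t : ZMod (3*m)))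
      = (t : ZMod 3) := by
    intro t
    rw [map_add, hj, map_intCast, zero_add]
  rw [Finset.sum_insert (by decide), Finset.sum_insert (by decide),
    Finset.sum_insert (by decide), Finset.sum_insert (by decide),
    Finset.sum_insert (by decide), Finset.sum_singleton] at h
  rw [lvB_eval0 m hm j (-3) (by omega) (by omega) (by rw [hc]; decide),
      lvB_eval1 m hm j (-2) (by omega) (by omega) (by rw [hc]; decide),
      lvB_eval2 m hm j (-1) (by omega) (by omega) (by rw [hc]; decide),
      lvB_eval1 m hm j 1 (by omega) (by omega) (by rw [hc]; decide),
      lvB_eval2 m hm j 2 (by omega) (by omega) (by rw [hc]; decide),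
      lvB_eval0 m hm j 3 (by omega) (by omega) (by rw [hc]; decide)] at h
  norm_num at h
  have e1 : j + (-2 : ZMod (3*m)) = j - 2 := by ring
  have e3 : j + (-1 : ZMod (3*m)) = j - 1 := by ring
  rw [e1, e3] at h
  linarith [h]

lemma col2 (m : ℕ) (hm : 2 < m) (P : ZMod (3*m) → ZMod (3*m) → ℚ)
    (hPB : ∀ i j, ∑ᶠ l, P i l * (lvBbar m l j : ℚ) = 0) (i j : ZMod (3*m))
    (hj : ZMod.castHom (dvd_mul_right 3 m) (ZMod 3) j = 2) :
    P i (j - 1) + P i (j + 1) - P i (j - 2) - P i (j + 2) = 0 := by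
  have h := hPB i j
  rw [finsum_red m hm P i j] at h
  have hc : ∀ t : ℤ, ZMod.castHom (dvd_mul_right 3 m) (ZMod 3) (j + (t : ZMod (3*m)))
      = 2 + (t : ZMod 3) := by
    intro t
    rw [map_add, hj, map_intCast]
  rw [Finset.sum_insert (by decide), Finset.sum_insert (by decide),
    Finset.sum_insert (by decide), Finset.sum_insert (by decide),
    Finset.sum_insert (by decide), Finset.sum_singleton] at h
  rw [lvB_eval2 m hm j (-3) (by omega) (by omega) (by rw [hc]; decide),
      lvB_eval0 m hm j (-2) (by omega) (by omega) (by rw [hc]; decide),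
      lvB_eval1 m hm j (-1) (by omega) (by omega) (by rw [hc]; decide),
      lvB_eval0 m hm j 1 (by omega) (by omega) (by rw [hc]; decide),
      lvB_eval1 m hm j 2 (by omega) (by omega) (by rw [hc]; decide),
      lvB_eval2 m hm j 3 (by omega) (by omega) (by rw [hc]; decide)] at h
  norm_num at h
  have e1 : j + (-2 : ZMod (3*m)) = j - 2 := by ring
  have e3 : j + (-1 : ZMod (3*m)) = j - 1 := by ring
  rw [e1, e3] at h
  linarith [h]

lemma hconst (f : ℤ → ℚ) (hf : ∀ d, f (d+1) = f d) : ∀ d, f d = f 0 := by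
  intro d
  induction d using Int.induction_on with
  | zero => rfl
  | succ k ih => rw [hf]; exact ih
  | pred k ih =>
    have h := hf (-(k:ℤ)-1)
    rw [show (-(k:ℤ)-1)+1 = -(k:ℤ) by ring] at h
    rw [← h]; exact ih

lemma hclass3 (v : ℤ) : ((v : ZMod 3)) = ((v % 3 : ℤ) : ZMod 3) := by
  conv_lhs => rw [show v = 3*(v/3) + v % 3 by omega]
  push_cast
  rw [show ((3:ZMod 3)) = 0 by decide]
  ring

lemma forward (m : ℕ) (hm : 2 < m) (P : ZMod (3*m) → ZMod (3*m) → ℚ)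
    (hP : ∀ i j, P j i = -P i j)
    (hPB : ∀ i j, ∑ᶠ l, P i l * (lvBbar m l j : ℚ) = 0)
    (ha : ∀ i j, P (i + 3) (j + 3) = P i j)
    (hb : ∀ i j, lvMut0bar m P i j = P (i - 1) (j - 1)) :
    ∃ (a₀ : ℚ) (q : ZMod m → ℚ), q 0 = 0 ∧ (∀ n, q (-n) = -q n) ∧
      ∀ (i j : ℤ) (k l : Fin 3),
        P (((3 * i + ((k : ℕ) : ℤ) : ℤ) : ZMod (3 * m)))
          (((3 * j + ((l : ℕ) : ℤ) : ℤ) : ZMod (3 * m))) =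
          q (((j - i : ℤ) : ZMod m)) + (((l : ℕ) : ℚ) - ((k : ℕ) : ℚ)) * a₀ := by
  haveI : NeZero m := ⟨by omega⟩
  have hcongr : ∀ (u u' v v' : ℤ), u = u' → v = v' →
      P (u : ZMod (3*m)) (v : ZMod (3*m)) = P (u' : ZMod (3*m)) (v' : ZMod (3*m)) := by
    rintro u _ v _ rfl rfl; rfl
  have hpi : ∀ u : ℤ, ZMod.castHom (dvd_mul_right 3 m) (ZMod 3) ((u : ZMod (3*m))) = (u : ZMod 3) :=
    fun u => map_intCast _ u
  have hdvd : ∀ u : ℤ, ((u : ZMod 3) = 0) ↔ (3:ℤ) ∣ u := by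
    intro u; rw [ZMod.intCast_zmod_eq_zero_iff_dvd]; norm_num
  -- periodicity
  have hGper : ∀ u v : ℤ, P ((u+3 : ℤ) : ZMod (3*m)) ((v+3 : ℤ) : ZMod (3*m))
      = P (u : ZMod (3*m)) (v : ZMod (3*m)) := by
    intro u v
    have h := ha ((u : ZMod (3*m))) ((v : ZMod (3*m)))
    rw [show ((u:ZMod (3*m)) + 3) = ((u+3 : ℤ) : ZMod (3*m)) by push_cast; ring,
        show ((v:ZMod (3*m)) + 3) = ((v+3 : ℤ) : ZMod (3*m)) by push_cast; ring] at h
    exact h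
  have hGshift : ∀ s u v : ℤ, P ((u + 3*s : ℤ) : ZMod (3*m)) ((v + 3*s : ℤ) : ZMod (3*m))
      = P (u : ZMod (3*m)) (v : ZMod (3*m)) := by
    intro s
    induction s using Int.induction_on with
    | zero => intro u v; exact hcongr _ _ _ _ (by ring) (by ring)
    | succ k ih =>
      intro u v
      have h1 := hGper (u + 3*k) (v + 3*k)
      rw [ih] at h1
      exact (hcongr _ _ _ _ (by push_cast; try ring) (by push_cast; try ring)).trans h1
    | pred k ih =>
      intro u v
      have h1 := hGper (u + 3*(-(k:ℤ)-1)) (v + 3*(-(k:ℤ)-1))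
      rw [hcongr _ (u + 3*(-(k:ℤ))) _ (v + 3*(-(k:ℤ))) (by ring) (by ring), ih] at h1
      exact (hcongr _ _ _ _ (by push_cast; try ring) (by push_cast; try ring)).trans h1.symm
  -- column relations
  have hGcol0 : ∀ u v : ℤ, (3:ℤ) ∣ v →
      P (u : ZMod (3*m)) ((v-2 : ℤ) : ZMod (3*m)) + P (u : ZMod (3*m)) ((v+2 : ℤ) : ZMod (3*m))
      - P (u : ZMod (3*m)) ((v-1 : ℤ) : ZMod (3*m)) - P (u : ZMod (3*m)) ((v+1 : ℤ) : ZMod (3*m)) = 0 := by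
    intro u v hv
    have h := col0 m hm P hPB ((u : ZMod (3*m))) ((v : ZMod (3*m)))
      (by rw [hpi]; exact (hdvd v).mpr hv)
    rw [show ((v:ZMod (3*m)) - 2) = ((v-2 : ℤ) : ZMod (3*m)) by push_cast; ring,
        show ((v:ZMod (3*m)) + 2) = ((v+2 : ℤ) : ZMod (3*m)) by push_cast; ring,
        show ((v:ZMod (3*m)) - 1) = ((v-1 : ℤ) : ZMod (3*m)) by push_cast; ring,
        show ((v:ZMod (3*m)) + 1) = ((v+1 : ℤ) : ZMod (3*m)) by push_cast; ring] at h
    exact h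
  have hGcol2 : ∀ u v : ℤ, v % 3 = 2 →
      P (u : ZMod (3*m)) ((v-1 : ℤ) : ZMod (3*m)) + P (u : ZMod (3*m)) ((v+1 : ℤ) : ZMod (3*m))
      - P (u : ZMod (3*m)) ((v-2 : ℤ) : ZMod (3*m)) - P (u : ZMod (3*m)) ((v+2 : ℤ) : ZMod (3*m)) = 0 := by
    intro u v hv
    have h := col2 m hm P hPB ((u : ZMod (3*m))) ((v : ZMod (3*m)))
      (by rw [hpi, hclass3, hv]; decide)
    rw [show ((v:ZMod (3*m)) - 2) = ((v-2 : ℤ) : ZMod (3*m)) by push_cast; ring,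
        show ((v:ZMod (3*m)) + 2) = ((v+2 : ℤ) : ZMod (3*m)) by push_cast; ring,
        show ((v:ZMod (3*m)) - 1) = ((v-1 : ℤ) : ZMod (3*m)) by push_cast; ring,
        show ((v:ZMod (3*m)) + 1) = ((v+1 : ℤ) : ZMod (3*m)) by push_cast; ring] at h
    exact h
  -- mutation relations
  have hGmutA : ∀ u v : ℤ, ¬ (3:ℤ) ∣ u → ¬ (3:ℤ) ∣ v →
      P (u : ZMod (3*m)) (v : ZMod (3*m)) = P ((u-1 : ℤ) : ZMod (3*m)) ((v-1 : ℤ) : ZMod (3*m)) := by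
    intro u v hu hv
    have h := hb ((u : ZMod (3*m))) ((v : ZMod (3*m)))
    rw [lvMut0bar, if_neg (by rw [hpi]; exact fun hc => hu ((hdvd u).mp hc)),
        if_neg (by rw [hpi]; exact fun hc => hv ((hdvd v).mp hc))] at h
    rw [show ((u:ZMod (3*m)) - 1) = ((u-1 : ℤ) : ZMod (3*m)) by push_cast; ring,
        show ((v:ZMod (3*m)) - 1) = ((v-1 : ℤ) : ZMod (3*m)) by push_cast; ring] at h
    exact h
  have hGmutB : ∀ u v : ℤ, (3:ℤ) ∣ u → ¬ (3:ℤ) ∣ v →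
      -P (u : ZMod (3*m)) (v : ZMod (3*m)) + P ((u-2 : ℤ) : ZMod (3*m)) (v : ZMod (3*m))
        + P ((u+2 : ℤ) : ZMod (3*m)) (v : ZMod (3*m))
      = P ((u-1 : ℤ) : ZMod (3*m)) ((v-1 : ℤ) : ZMod (3*m)) := by
    intro u v hu hv
    have h := hb ((u : ZMod (3*m))) ((v : ZMod (3*m)))
    rw [lvMut0bar, if_pos (by rw [hpi]; exact (hdvd u).mpr hu),
        if_neg (by rw [hpi]; exact fun hc => hv ((hdvd v).mp hc))] at h
    rw [show ((u:ZMod (3*m)) - 2) = ((u-2 : ℤ) : ZMod (3*m)) by push_cast; ring,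
        show ((u:ZMod (3*m)) + 2) = ((u+2 : ℤ) : ZMod (3*m)) by push_cast; ring,
        show ((u:ZMod (3*m)) - 1) = ((u-1 : ℤ) : ZMod (3*m)) by push_cast; ring,
        show ((v:ZMod (3*m)) - 1) = ((v-1 : ℤ) : ZMod (3*m)) by push_cast; ring] at h
    exact h

  -- canonical mutation consequences
  have h00 : ∀ d : ℤ, P ((1:ℤ) : ZMod (3*m)) ((3*d+1 : ℤ) : ZMod (3*m))
      = P ((0:ℤ) : ZMod (3*m)) ((3*d : ℤ) : ZMod (3*m)) := fun d =>
    (hGmutA 1 (3*d+1) (by omega) (by omega)).trans (hcongr _ _ _ _ (by ring) (by ring))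
  have h22 : ∀ d : ℤ, P ((2:ℤ) : ZMod (3*m)) ((3*d+2 : ℤ) : ZMod (3*m))
      = P ((1:ℤ) : ZMod (3*m)) ((3*d+1 : ℤ) : ZMod (3*m)) := fun d =>
    (hGmutA 2 (3*d+2) (by omega) (by omega)).trans (hcongr _ _ _ _ (by ring) (by ring))
  have h12 : ∀ d : ℤ, P ((1:ℤ) : ZMod (3*m)) ((3*d+2 : ℤ) : ZMod (3*m))
      = P ((0:ℤ) : ZMod (3*m)) ((3*d+1 : ℤ) : ZMod (3*m)) := fun d =>
    (hGmutA 1 (3*d+2) (by omega) (by omega)).trans (hcongr _ _ _ _ (by ring) (by ring))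
  have h21 : ∀ d : ℤ, P ((2:ℤ) : ZMod (3*m)) ((3*d+1 : ℤ) : ZMod (3*m))
      = P ((1:ℤ) : ZMod (3*m)) ((3*d : ℤ) : ZMod (3*m)) := fun d =>
    (hGmutA 2 (3*d+1) (by omega) (by omega)).trans (hcongr _ _ _ _ (by ring) (by ring))
  have hskew : ∀ u v d : ℤ, P ((u:ℤ) : ZMod (3*m)) ((3*d+v : ℤ) : ZMod (3*m))
      = -P ((v:ℤ) : ZMod (3*m)) ((3*(-d)+u : ℤ) : ZMod (3*m)) := by
    intro u v d
    have h1 : P ((3*d+v : ℤ) : ZMod (3*m)) ((u : ℤ) : ZMod (3*m))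
        = P ((v:ℤ) : ZMod (3*m)) ((3*(-d)+u : ℤ) : ZMod (3*m)) :=
      (hcongr _ (v + 3*d) _ ((3*(-d)+u) + 3*d) (by ring) (by ring)).trans
        (hGshift d v (3*(-d)+u))
    exact (hP _ _).trans (by rw [h1])
  have hodd : ∀ d : ℤ, P ((0:ℤ) : ZMod (3*m)) ((3*(-d) : ℤ) : ZMod (3*m))
      = -P ((0:ℤ) : ZMod (3*m)) ((3*d : ℤ) : ZMod (3*m)) := by
    intro d
    have h1 := hskew 0 0 d
    rw [hcongr 0 0 (3*d+0) (3*d) rfl (by ring),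
        hcongr 0 0 (3*(-d)+0) (3*(-d)) rfl (by ring)] at h1
    linarith
  have hstep : ∀ u d : ℤ,
      P ((u:ℤ) : ZMod (3*m)) ((3*(d+1)+1 : ℤ) : ZMod (3*m))
        - P ((u:ℤ) : ZMod (3*m)) ((3*(d+1) : ℤ) : ZMod (3*m))
      = P ((u:ℤ) : ZMod (3*m)) ((3*d+1 : ℤ) : ZMod (3*m))
        - P ((u:ℤ) : ZMod (3*m)) ((3*d : ℤ) : ZMod (3*m)) := by
    intro u d
    have h := hGcol2 u (3*d+2) (by omega)
    rw [hcongr u u (3*d+2-1) (3*d+1) rfl (by ring),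
        hcongr u u (3*d+2+1) (3*(d+1)) rfl (by ring),
        hcongr u u (3*d+2-2) (3*d) rfl (by ring),
        hcongr u u (3*d+2+2) (3*(d+1)+1) rfl (by ring)] at h
    linarith
  obtain ⟨aa, haa⟩ : ∃ aa : ℚ, aa
      = P ((0:ℤ) : ZMod (3*m)) ((3*(0:ℤ)+1 : ℤ) : ZMod (3*m))
        - P ((0:ℤ) : ZMod (3*m)) ((3*(0:ℤ) : ℤ) : ZMod (3*m)) := ⟨_, rfl⟩
  have hc0 : ∀ d : ℤ,
      P ((0:ℤ) : ZMod (3*m)) ((3*d+1 : ℤ) : ZMod (3*m))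
        - P ((0:ℤ) : ZMod (3*m)) ((3*d : ℤ) : ZMod (3*m))
      = P ((0:ℤ) : ZMod (3*m)) ((3*(0:ℤ)+1 : ℤ) : ZMod (3*m))
        - P ((0:ℤ) : ZMod (3*m)) ((3*(0:ℤ) : ℤ) : ZMod (3*m)) :=
    hconst (fun d => P ((0:ℤ) : ZMod (3*m)) ((3*d+1 : ℤ) : ZMod (3*m))
      - P ((0:ℤ) : ZMod (3*m)) ((3*d : ℤ) : ZMod (3*m))) (fun d => hstep 0 d)
  have F01 : ∀ d : ℤ, P ((0:ℤ) : ZMod (3*m)) ((3*d+1 : ℤ) : ZMod (3*m))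
      = P ((0:ℤ) : ZMod (3*m)) ((3*d : ℤ) : ZMod (3*m)) + aa := by
    intro d; have h := hc0 d; rw [← haa] at h; linarith
  have F11 : ∀ d : ℤ, P ((1:ℤ) : ZMod (3*m)) ((3*d+1 : ℤ) : ZMod (3*m))
      = P ((0:ℤ) : ZMod (3*m)) ((3*d : ℤ) : ZMod (3*m)) := h00
  have F22 : ∀ d : ℤ, P ((2:ℤ) : ZMod (3*m)) ((3*d+2 : ℤ) : ZMod (3*m))
      = P ((0:ℤ) : ZMod (3*m)) ((3*d : ℤ) : ZMod (3*m)) := fun d => (h22 d).trans (h00 d)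
  have F12 : ∀ d : ℤ, P ((1:ℤ) : ZMod (3*m)) ((3*d+2 : ℤ) : ZMod (3*m))
      = P ((0:ℤ) : ZMod (3*m)) ((3*d : ℤ) : ZMod (3*m)) + aa := fun d => (h12 d).trans (F01 d)
  have F10 : ∀ d : ℤ, P ((1:ℤ) : ZMod (3*m)) ((3*d : ℤ) : ZMod (3*m))
      = P ((0:ℤ) : ZMod (3*m)) ((3*d : ℤ) : ZMod (3*m)) - aa := by
    intro d
    have h1 := hskew 1 0 d
    rw [hcongr 1 1 (3*d+0) (3*d) rfl (by ring)] at h1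
    have h2 := F01 (-d)
    have h3 := hodd d
    rw [hcongr 0 0 (3*(-d)+1) (3*(-d)+1) rfl rfl] at h2
    linarith
  have F21 : ∀ d : ℤ, P ((2:ℤ) : ZMod (3*m)) ((3*d+1 : ℤ) : ZMod (3*m))
      = P ((0:ℤ) : ZMod (3*m)) ((3*d : ℤ) : ZMod (3*m)) - aa := fun d => (h21 d).trans (F10 d)
  have F20 : ∀ d : ℤ, P ((2:ℤ) : ZMod (3*m)) ((3*d : ℤ) : ZMod (3*m))
      = P ((0:ℤ) : ZMod (3*m)) ((3*d : ℤ) : ZMod (3*m)) - 2*aa := by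
    intro d
    have hmB := hGmutB 0 (3*(d-1)+1) ⟨0, rfl⟩ (by omega)
    have e1 : P ((0-2 : ℤ) : ZMod (3*m)) ((3*(d-1)+1 : ℤ) : ZMod (3*m))
        = P ((1:ℤ) : ZMod (3*m)) ((3*d+1 : ℤ) : ZMod (3*m)) :=
      (hcongr _ (1 + 3*(-1)) _ ((3*d+1) + 3*(-1)) (by ring) (by ring)).trans
        (hGshift (-1) 1 (3*d+1))
    have e2 : P ((0+2 : ℤ) : ZMod (3*m)) ((3*(d-1)+1 : ℤ) : ZMod (3*m))
        = P ((2:ℤ) : ZMod (3*m)) ((3*(d-1)+1 : ℤ) : ZMod (3*m)) := hcongr _ _ _ _ (by ring) rfl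
    have e3 : P ((0-1 : ℤ) : ZMod (3*m)) ((3*(d-1)+1-1 : ℤ) : ZMod (3*m))
        = P ((2:ℤ) : ZMod (3*m)) ((3*d : ℤ) : ZMod (3*m)) :=
      (hcongr _ (2 + 3*(-1)) _ (3*d + 3*(-1)) (by ring) (by ring)).trans
        (hGshift (-1) 2 (3*d))
    rw [e1, e2, e3] at hmB
    have k1 := F01 (d-1)
    have k2 := F11 d
    have k3 := F21 (d-1)
    linarith
  have F02 : ∀ d : ℤ, P ((0:ℤ) : ZMod (3*m)) ((3*d+2 : ℤ) : ZMod (3*m))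
      = P ((0:ℤ) : ZMod (3*m)) ((3*d : ℤ) : ZMod (3*m)) + 2*aa := by
    intro d
    have h1 := hskew 0 2 d
    rw [hcongr 2 2 (3*(-d)+0) (3*(-d)) rfl (by ring)] at h1
    have h2 := F20 (-d)
    have h3 := hodd d
    linarith
  have Fall : ∀ (d : ℤ) (a b : ℕ), a < 3 → b < 3 →
      P (((a:ℕ) : ℤ) : ZMod (3*m)) ((3*d + ((b:ℕ):ℤ) : ℤ) : ZMod (3*m))
      = P ((0:ℤ) : ZMod (3*m)) ((3*d : ℤ) : ZMod (3*m)) + (((b:ℕ):ℚ) - ((a:ℕ):ℚ)) * aa := by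
    intro d a b ha hb
    interval_cases a <;> interval_cases b
    · rw [hcongr _ 0 _ (3*d) (by push_cast; try ring) (by push_cast; try ring)]; push_cast; ring
    · rw [hcongr _ 0 _ (3*d+1) (by push_cast; try ring) (by push_cast; try ring), F01 d]; push_cast; ring
    · rw [hcongr _ 0 _ (3*d+2) (by push_cast; try ring) (by push_cast; try ring), F02 d]; push_cast; ring
    · rw [hcongr _ 1 _ (3*d) (by push_cast; try ring) (by push_cast; try ring), F10 d]; push_cast; ring
    · rw [hcongr _ 1 _ (3*d+1) (by push_cast; try ring) (by push_cast; try ring), F11 d]; push_cast; ring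
    · rw [hcongr _ 1 _ (3*d+2) (by push_cast; try ring) (by push_cast; try ring), F12 d]; push_cast; ring
    · rw [hcongr _ 2 _ (3*d) (by push_cast; try ring) (by push_cast; try ring), F20 d]; push_cast; ring
    · rw [hcongr _ 2 _ (3*d+1) (by push_cast; try ring) (by push_cast; try ring), F21 d]; push_cast; ring
    · rw [hcongr _ 2 _ (3*d+2) (by push_cast; try ring) (by push_cast; try ring), F22 d]; push_cast; ring
  -- periodicity mod m of the diagonal
  have hqper : ∀ d s : ℤ, P ((0:ℤ) : ZMod (3*m)) ((3*(d + m*s) : ℤ) : ZMod (3*m))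
      = P ((0:ℤ) : ZMod (3*m)) ((3*d : ℤ) : ZMod (3*m)) := by
    intro d s
    have h0 : ((3*(m:ℤ)*s : ℤ) : ZMod (3*m)) = 0 := by
      rw [ZMod.intCast_zmod_eq_zero_iff_dvd]
      exact ⟨s, by push_cast; ring⟩
    have : ((3*(d + m*s) : ℤ) : ZMod (3*m)) = ((3*d : ℤ) : ZMod (3*m)) := by
      calc ((3*(d + m*s) : ℤ) : ZMod (3*m))
          = ((3*d : ℤ) : ZMod (3*m)) + ((3*(m:ℤ)*s : ℤ) : ZMod (3*m)) := by push_cast; ring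
        _ = ((3*d : ℤ) : ZMod (3*m)) := by rw [h0, add_zero]
    rw [this]
  have hvalcast : ∀ d : ℤ, ∃ s : ℤ, (((d : ZMod m).val : ℕ) : ℤ) = d + m*s := by
    intro d
    have h1 : (((((d : ZMod m).val : ℕ) : ℤ)) : ZMod m) = ((d : ZMod m)) := by
      rw [Int.cast_natCast]
      exact ZMod.natCast_rightInverse _
    rw [ZMod.intCast_eq_intCast_iff] at h1
    obtain ⟨t, ht⟩ := h1.dvd
    exact ⟨-t, by rw [mul_neg]; linarith⟩
  have hq : ∀ d : ℤ, P ((0:ℤ) : ZMod (3*m)) ((3*((((d : ZMod m)).val : ℕ) : ℤ) : ℤ) : ZMod (3*m))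
      = P ((0:ℤ) : ZMod (3*m)) ((3*d : ℤ) : ZMod (3*m)) := by
    intro d
    obtain ⟨s, hs⟩ := hvalcast d
    rw [hs]
    exact hqper d s
  refine ⟨aa, fun x => P ((0:ℤ) : ZMod (3*m)) ((3*((x.val : ℕ) : ℤ) : ℤ) : ZMod (3*m)), ?_, ?_, ?_⟩
  · show P ((0:ℤ) : ZMod (3*m)) ((3*(((0 : ZMod m).val : ℕ) : ℤ) : ℤ) : ZMod (3*m)) = 0
    rw [show (((0 : ZMod m).val : ℕ) : ℤ) = 0 by simp]
    have h1 := hP ((0:ℤ) : ZMod (3*m)) ((0:ℤ) : ZMod (3*m))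
    rw [hcongr 0 0 (3*(0:ℤ)) 0 rfl (by ring)]
    linarith
  · intro n
    show P ((0:ℤ) : ZMod (3*m)) ((3*(((-n).val : ℕ) : ℤ) : ℤ) : ZMod (3*m))
      = -P ((0:ℤ) : ZMod (3*m)) ((3*((n.val : ℕ) : ℤ) : ℤ) : ZMod (3*m))
    have hA : ((((-n).val : ℕ) : ℤ) : ZMod m) = ((-((n.val : ℕ) : ℤ) : ℤ) : ZMod m) := by
      push_cast
      rw [ZMod.natCast_rightInverse (-n), ZMod.natCast_rightInverse n]
    rw [ZMod.intCast_eq_intCast_iff] at hA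
    obtain ⟨t, ht⟩ := hA.dvd
    obtain ⟨s, hs⟩ : ∃ s : ℤ, (((-n).val : ℕ) : ℤ) = -((n.val : ℕ) : ℤ) + m*s := ⟨-t, by rw [mul_neg]; linarith⟩
    rw [hs, hqper (-((n.val : ℕ) : ℤ)) s, hodd ((n.val : ℕ) : ℤ)]
  · intro i j k l
    show P (((3 * i + ((k : ℕ) : ℤ) : ℤ)) : ZMod (3 * m)) (((3 * j + ((l : ℕ) : ℤ) : ℤ)) : ZMod (3 * m))
      = P ((0:ℤ) : ZMod (3*m)) ((3*(((((j - i : ℤ) : ZMod m)).val : ℕ) : ℤ) : ℤ) : ZMod (3*m))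
        + (((l : ℕ) : ℚ) - ((k : ℕ) : ℚ)) * aa
    rw [hq (j - i)]
    have hsh : P (((3 * i + ((k : ℕ) : ℤ) : ℤ)) : ZMod (3 * m)) (((3 * j + ((l : ℕ) : ℤ) : ℤ)) : ZMod (3 * m))
        = P ((((k:ℕ):ℤ) : ℤ) : ZMod (3*m)) (((3*(j-i) + ((l:ℕ):ℤ) : ℤ)) : ZMod (3*m)) :=
      (hcongr _ (((k:ℕ):ℤ) + 3*i) _ ((3*(j-i) + ((l:ℕ):ℤ)) + 3*i) (by ring) (by ring)).trans
        (hGshift i (((k:ℕ):ℤ)) (3*(j-i) + ((l:ℕ):ℤ)))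
    rw [hsh]
    exact Fall (j-i) (k:ℕ) (l:ℕ) k.isLt l.isLt


lemma backward (m : ℕ) (hm : 2 < m) (P : ZMod (3*m) → ZMod (3*m) → ℚ)
    (a₀ : ℚ) (q : ZMod m → ℚ)
    (hf : ∀ (i j : ℤ) (k l : Fin 3),
        P (((3 * i + ((k : ℕ) : ℤ) : ℤ) : ZMod (3 * m)))
          (((3 * j + ((l : ℕ) : ℤ) : ℤ) : ZMod (3 * m))) =
          q (((j - i : ℤ) : ZMod m)) + (((l : ℕ) : ℚ) - ((k : ℕ) : ℚ)) * a₀) :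
    (∀ i j, P (i + 3) (j + 3) = P i j) ∧
      (∀ i j, lvMut0bar m P i j = P (i - 1) (j - 1)) := by
  have hf' : ∀ (i j : ℤ) (a b : ℕ) (ha : a < 3) (hb : b < 3),
      P ((3*i + (a : ℕ) : ℤ) : ZMod (3*m)) ((3*j + (b : ℕ) : ℤ) : ZMod (3*m))
      = q (((j - i : ℤ) : ZMod m)) + ((b : ℚ) - (a : ℚ)) * a₀ :=
    fun i j a b ha hb => hf i j ⟨a, ha⟩ ⟨b, hb⟩
  have hpi : ∀ u : ℤ, ZMod.castHom (dvd_mul_right 3 m) (ZMod 3) ((u : ZMod (3*m))) = (u : ZMod 3) :=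
    fun u => map_intCast _ u
  have hcls : ∀ i a : ℤ, ((3*i + a : ℤ) : ZMod 3) = ((a : ℤ) : ZMod 3) := by
    intro i a; push_cast; rw [show ((3:ZMod 3)) = 0 by decide]; ring
  have hdec : ∀ x : ZMod (3*m), ∃ (i : ℤ) (a : ℕ), a < 3 ∧
      x = ((3*i + (a : ℕ) : ℤ) : ZMod (3*m)) := by
    intro x
    refine ⟨((x.val / 3 : ℕ) : ℤ), x.val % 3, Nat.mod_lt _ (by norm_num), ?_⟩
    haveI : NeZero (3*m) := ⟨by omega⟩
    have h1 : ((x.val : ℕ) : ZMod (3*m)) = x := ZMod.natCast_rightInverse x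
    rw [show (3*((x.val / 3 : ℕ) : ℤ) + ((x.val % 3 : ℕ) : ℤ) : ℤ) = ((x.val : ℕ) : ℤ) by
      push_cast; omega]
    rw [Int.cast_natCast, h1]
  constructor
  · intro x y
    obtain ⟨i, a, ha, rfl⟩ := hdec x
    obtain ⟨j, b, hb, rfl⟩ := hdec y
    rw [show ((3*(i) + ((a : ℕ) : ℤ) : ℤ) : ZMod (3*m)) + 3 = ((3*(i+1) + ((a : ℕ) : ℤ) : ℤ) : ZMod (3*m)) by push_cast; ring,
        show ((3*(j) + ((b : ℕ) : ℤ) : ℤ) : ZMod (3*m)) + 3 = ((3*(j+1) + ((b : ℕ) : ℤ) : ℤ) : ZMod (3*m)) by push_cast; ring,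
        hf' (i+1) (j+1) a b ha hb, hf' i j a b ha hb,
        show (j+1) - (i+1) = j - i by ring]
  · intro x y
    obtain ⟨i, a, ha, rfl⟩ := hdec x
    obtain ⟨j, b, hb, rfl⟩ := hdec y
    interval_cases a <;> interval_cases b
    · rw [lvMut0bar, if_pos (by rw [hpi, hcls]; decide), if_pos (by rw [hpi, hcls]; decide)]
      rw [show ((3*(i) + ((0 : ℕ) : ℤ) : ℤ) : ZMod (3*m)) - 2 = ((3*(i-1) + ((1 : ℕ) : ℤ) : ℤ) : ZMod (3*m)) by push_cast; ring,
          show ((3*(i) + ((0 : ℕ) : ℤ) : ℤ) : ZMod (3*m)) + 2 = ((3*(i) + ((2 : ℕ) : ℤ) : ℤ) : ZMod (3*m)) by push_cast; ring,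
          show ((3*(j) + ((0 : ℕ) : ℤ) : ℤ) : ZMod (3*m)) - 2 = ((3*(j-1) + ((1 : ℕ) : ℤ) : ℤ) : ZMod (3*m)) by push_cast; ring,
          show ((3*(j) + ((0 : ℕ) : ℤ) : ℤ) : ZMod (3*m)) + 2 = ((3*(j) + ((2 : ℕ) : ℤ) : ℤ) : ZMod (3*m)) by push_cast; ring,
          show ((3*(i) + ((0 : ℕ) : ℤ) : ℤ) : ZMod (3*m)) - 1 = ((3*(i-1) + ((2 : ℕ) : ℤ) : ℤ) : ZMod (3*m)) by push_cast; ring,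
          show ((3*(j) + ((0 : ℕ) : ℤ) : ℤ) : ZMod (3*m)) - 1 = ((3*(j-1) + ((2 : ℕ) : ℤ) : ℤ) : ZMod (3*m)) by push_cast; ring]
      rw [hf' (i-1) (j-1) 1 1 (by norm_num) (by norm_num),
          hf' (i-1) (j) 1 0 (by norm_num) (by norm_num),
          hf' (i-1) (j) 1 2 (by norm_num) (by norm_num),
          hf' (i) (j-1) 0 1 (by norm_num) (by norm_num),
          hf' (i) (j) 0 0 (by norm_num) (by norm_num),
          hf' (i) (j) 0 2 (by norm_num) (by norm_num),
          hf' (i) (j-1) 2 1 (by norm_num) (by norm_num),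
          hf' (i) (j) 2 0 (by norm_num) (by norm_num),
          hf' (i) (j) 2 2 (by norm_num) (by norm_num),
          hf' (i-1) (j-1) 2 2 (by norm_num) (by norm_num),
          show (j-1) - (i-1) = j - i by ring]
      push_cast
      ring
    · rw [lvMut0bar, if_pos (by rw [hpi, hcls]; decide), if_neg (by rw [hpi, hcls]; decide)]
      rw [show ((3*(i) + ((0 : ℕ) : ℤ) : ℤ) : ZMod (3*m)) - 2 = ((3*(i-1) + ((1 : ℕ) : ℤ) : ℤ) : ZMod (3*m)) by push_cast; ring,
          show ((3*(i) + ((0 : ℕ) : ℤ) : ℤ) : ZMod (3*m)) + 2 = ((3*(i) + ((2 : ℕ) : ℤ) : ℤ) : ZMod (3*m)) by push_cast; ring,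
          show ((3*(i) + ((0 : ℕ) : ℤ) : ℤ) : ZMod (3*m)) - 1 = ((3*(i-1) + ((2 : ℕ) : ℤ) : ℤ) : ZMod (3*m)) by push_cast; ring,
          show ((3*(j) + ((1 : ℕ) : ℤ) : ℤ) : ZMod (3*m)) - 1 = ((3*(j) + ((0 : ℕ) : ℤ) : ℤ) : ZMod (3*m)) by push_cast; ring]
      rw [hf' i j 0 1 (by norm_num) (by norm_num),
          hf' (i-1) j 1 1 (by norm_num) (by norm_num),
          hf' i j 2 1 (by norm_num) (by norm_num),
          hf' (i-1) j 2 0 (by norm_num) (by norm_num)]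
      push_cast
      ring
    · rw [lvMut0bar, if_pos (by rw [hpi, hcls]; decide), if_neg (by rw [hpi, hcls]; decide)]
      rw [show ((3*(i) + ((0 : ℕ) : ℤ) : ℤ) : ZMod (3*m)) - 2 = ((3*(i-1) + ((1 : ℕ) : ℤ) : ℤ) : ZMod (3*m)) by push_cast; ring,
          show ((3*(i) + ((0 : ℕ) : ℤ) : ℤ) : ZMod (3*m)) + 2 = ((3*(i) + ((2 : ℕ) : ℤ) : ℤ) : ZMod (3*m)) by push_cast; ring,
          show ((3*(i) + ((0 : ℕ) : ℤ) : ℤ) : ZMod (3*m)) - 1 = ((3*(i-1) + ((2 : ℕ) : ℤ) : ℤ) : ZMod (3*m)) by push_cast; ring,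
          show ((3*(j) + ((2 : ℕ) : ℤ) : ℤ) : ZMod (3*m)) - 1 = ((3*(j) + ((1 : ℕ) : ℤ) : ℤ) : ZMod (3*m)) by push_cast; ring]
      rw [hf' i j 0 2 (by norm_num) (by norm_num),
          hf' (i-1) j 1 2 (by norm_num) (by norm_num),
          hf' i j 2 2 (by norm_num) (by norm_num),
          hf' (i-1) j 2 1 (by norm_num) (by norm_num)]
      push_cast
      ring
    · rw [lvMut0bar, if_neg (by rw [hpi, hcls]; decide), if_pos (by rw [hpi, hcls]; decide)]
      rw [show ((3*(j) + ((0 : ℕ) : ℤ) : ℤ) : ZMod (3*m)) - 2 = ((3*(j-1) + ((1 : ℕ) : ℤ) : ℤ) : ZMod (3*m)) by push_cast; ring,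
          show ((3*(j) + ((0 : ℕ) : ℤ) : ℤ) : ZMod (3*m)) + 2 = ((3*(j) + ((2 : ℕ) : ℤ) : ℤ) : ZMod (3*m)) by push_cast; ring,
          show ((3*(i) + ((1 : ℕ) : ℤ) : ℤ) : ZMod (3*m)) - 1 = ((3*(i) + ((0 : ℕ) : ℤ) : ℤ) : ZMod (3*m)) by push_cast; ring,
          show ((3*(j) + ((0 : ℕ) : ℤ) : ℤ) : ZMod (3*m)) - 1 = ((3*(j-1) + ((2 : ℕ) : ℤ) : ℤ) : ZMod (3*m)) by push_cast; ring]
      rw [hf' i j 1 0 (by norm_num) (by norm_num),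
          hf' i (j-1) 1 1 (by norm_num) (by norm_num),
          hf' i j 1 2 (by norm_num) (by norm_num),
          hf' i (j-1) 0 2 (by norm_num) (by norm_num)]
      push_cast
      ring
    · rw [lvMut0bar, if_neg (by rw [hpi, hcls]; decide), if_neg (by rw [hpi, hcls]; decide)]
      rw [show ((3*(i) + ((1 : ℕ) : ℤ) : ℤ) : ZMod (3*m)) - 1 = ((3*(i) + ((0 : ℕ) : ℤ) : ℤ) : ZMod (3*m)) by push_cast; ring,
          show ((3*(j) + ((1 : ℕ) : ℤ) : ℤ) : ZMod (3*m)) - 1 = ((3*(j) + ((0 : ℕ) : ℤ) : ℤ) : ZMod (3*m)) by push_cast; ring]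
      rw [hf' i j 1 1 (by norm_num) (by norm_num),
          hf' i j 0 0 (by norm_num) (by norm_num)]
      push_cast
      ring
    · rw [lvMut0bar, if_neg (by rw [hpi, hcls]; decide), if_neg (by rw [hpi, hcls]; decide)]
      rw [show ((3*(i) + ((1 : ℕ) : ℤ) : ℤ) : ZMod (3*m)) - 1 = ((3*(i) + ((0 : ℕ) : ℤ) : ℤ) : ZMod (3*m)) by push_cast; ring,
          show ((3*(j) + ((2 : ℕ) : ℤ) : ℤ) : ZMod (3*m)) - 1 = ((3*(j) + ((1 : ℕ) : ℤ) : ℤ) : ZMod (3*m)) by push_cast; ring]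
      rw [hf' i j 1 2 (by norm_num) (by norm_num),
          hf' i j 0 1 (by norm_num) (by norm_num)]
      push_cast
      ring
    · rw [lvMut0bar, if_neg (by rw [hpi, hcls]; decide), if_pos (by rw [hpi, hcls]; decide)]
      rw [show ((3*(j) + ((0 : ℕ) : ℤ) : ℤ) : ZMod (3*m)) - 2 = ((3*(j-1) + ((1 : ℕ) : ℤ) : ℤ) : ZMod (3*m)) by push_cast; ring,
          show ((3*(j) + ((0 : ℕ) : ℤ) : ℤ) : ZMod (3*m)) + 2 = ((3*(j) + ((2 : ℕ) : ℤ) : ℤ) : ZMod (3*m)) by push_cast; ring,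
          show ((3*(i) + ((2 : ℕ) : ℤ) : ℤ) : ZMod (3*m)) - 1 = ((3*(i) + ((1 : ℕ) : ℤ) : ℤ) : ZMod (3*m)) by push_cast; ring,
          show ((3*(j) + ((0 : ℕ) : ℤ) : ℤ) : ZMod (3*m)) - 1 = ((3*(j-1) + ((2 : ℕ) : ℤ) : ℤ) : ZMod (3*m)) by push_cast; ring]
      rw [hf' i j 2 0 (by norm_num) (by norm_num),
          hf' i (j-1) 2 1 (by norm_num) (by norm_num),
          hf' i j 2 2 (by norm_num) (by norm_num),
          hf' i (j-1) 1 2 (by norm_num) (by norm_num)]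
      push_cast
      ring
    · rw [lvMut0bar, if_neg (by rw [hpi, hcls]; decide), if_neg (by rw [hpi, hcls]; decide)]
      rw [show ((3*(i) + ((2 : ℕ) : ℤ) : ℤ) : ZMod (3*m)) - 1 = ((3*(i) + ((1 : ℕ) : ℤ) : ℤ) : ZMod (3*m)) by push_cast; ring,
          show ((3*(j) + ((1 : ℕ) : ℤ) : ℤ) : ZMod (3*m)) - 1 = ((3*(j) + ((0 : ℕ) : ℤ) : ℤ) : ZMod (3*m)) by push_cast; ring]
      rw [hf' i j 2 1 (by norm_num) (by norm_num),
          hf' i j 1 0 (by norm_num) (by norm_num)]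
      push_cast
      ring
    · rw [lvMut0bar, if_neg (by rw [hpi, hcls]; decide), if_neg (by rw [hpi, hcls]; decide)]
      rw [show ((3*(i) + ((2 : ℕ) : ℤ) : ℤ) : ZMod (3*m)) - 1 = ((3*(i) + ((1 : ℕ) : ℤ) : ℤ) : ZMod (3*m)) by push_cast; ring,
          show ((3*(j) + ((2 : ℕ) : ℤ) : ℤ) : ZMod (3*m)) - 1 = ((3*(j) + ((1 : ℕ) : ℤ) : ℤ) : ZMod (3*m)) by push_cast; ring]
      rw [hf' i j 2 2 (by norm_num) (by norm_num),
          hf' i j 1 1 (by norm_num) (by norm_num)]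
      push_cast
      ring

/-- For `m > 2` and a skew-symmetric rational matrix `P̄` with `P̄ B̄ = O`, `P̄`
satisfies (a) `p_{i+3,j+3} = p_{ij}` and (b) `μ_{0̄}(P̄)_{ij} = p_{i-1,j-1}` if and
only if there are `a₀ ∈ ℚ` and `q : ℤ/mℤ → ℚ` with `q 0 = 0`, `q (-n) = -q n`, such
that `p_{3i+k,3j+l} = q (j-i) + (l-k) a₀` for all `i, j` and `k, l ∈ {0,1,2}`. -/
theorem stmt12 (m : ℕ) (hm : 2 < m) (P : ZMod (3 * m) → ZMod (3 * m) → ℚ)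
    (hP : ∀ i j, P j i = -P i j)
    (hPB : ∀ i j, ∑ᶠ l, P i l * (lvBbar m l j : ℚ) = 0) :
    ((∀ i j, P (i + 3) (j + 3) = P i j) ∧
      (∀ i j, lvMut0bar m P i j = P (i - 1) (j - 1))) ↔
    ∃ (a₀ : ℚ) (q : ZMod m → ℚ), q 0 = 0 ∧ (∀ n, q (-n) = -q n) ∧
      ∀ (i j : ℤ) (k l : Fin 3),
        P (((3 * i + ((k : ℕ) : ℤ) : ℤ) : ZMod (3 * m)))
          (((3 * j + ((l : ℕ) : ℤ) : ℤ) : ZMod (3 * m))) =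
          q (((j - i : ℤ) : ZMod m)) + (((l : ℕ) : ℚ) - ((k : ℕ) : ℚ)) * a₀ := by
  constructor
  · rintro ⟨ha, hb⟩
    exact forward m hm P hP hPB ha hb
  · rintro ⟨a₀, q, h0, hodd, hf⟩
    exact backward m hm P a₀ q hf
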